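/- For integers r ≥ 1 and t ≥ 6r - 4, the 2-color Ramsey number R(S_t^r, S_t^r) is at most 2t + 2r - 1: every red/blue edge coloring of K_{2t+2r-1} contains a monochromatic copy of S_t^r. -/

import Mathlib

/-- `SGraph t r` is the graph `S_t^r`: a star `K_{1,t-1}` with center `0`
together with `r` independent edges `(1,2), (3,4), …, (2r-1,2r)` among the leaves. -/
def SGraph (t r : ℕ) : SimpleGraph (Fin t) :=
  SimpleGraph.fromRel fun a b =>
    a.val = 0 ∨ (b.val = a.val + 1 ∧ a.val % 2 = 1 ∧ b.val ≤ 2 * r)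

/-- A monochromatic copy of `H` in the edge-coloring `c` of the complete graph on `V`. -/
def HasMonoCopy {α V C : Type*} (H : SimpleGraph α) (c : Sym2 V → C) : Prop :=
  ∃ (f : α ↪ V) (col : C), ∀ a b : α, H.Adj a b → c s(f a, f b) = col

/-- A copy of `H` in the edge-coloring `c` all of whose edges get color `col`. -/
def HasMonoCopyCol {α V C : Type*} (H : SimpleGraph α) (c : Sym2 V → C) (col : C) : Prop :=
  ∃ f : α ↪ V, ∀ a b : α, H.Adj a b → c s(f a, f b) = col

/-- A rainbow triangle in the edge-coloring `c` of the complete graph on `V`. -/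
def HasRainbowTriangle {V C : Type*} (c : Sym2 V → C) : Prop :=
  ∃ x y z : V,
    c s(x, y) ≠ c s(y, z) ∧ c s(y, z) ≠ c s(x, z) ∧ c s(x, y) ≠ c s(x, z)

set_option linter.unreachableTactic false
set_option linter.unusedTactic false

namespace StrHelper
open Finset

lemma exists_inj {n : ℕ} (N : Finset (Fin n)) (m : ℕ) (h : m ≤ N.card) :
    ∃ q : Fin m → Fin n, Function.Injective q ∧ ∀ i, q i ∈ N := by
  obtain ⟨N', hsub, hcard⟩ := N.exists_subset_card_eq h
  refine ⟨fun i => (N'.equivFin.symm (Fin.cast hcard.symm i) : Fin n), ?_, ?_⟩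
  · intro i j hij
    have h2 := N'.equivFin.symm.injective (Subtype.ext hij)
    have h3 : (Fin.cast hcard.symm i).val = (Fin.cast hcard.symm j).val := by rw [h2]
    exact Fin.ext h3
  · intro i; exact hsub (N'.equivFin.symm _).2

lemma build {n t r : ℕ} (c : Sym2 (Fin n) → Fin 2) (col : Fin 2) (ht : 2 ≤ t)
    (v : Fin n) (g : Fin (t-1) → Fin n) (hg : Function.Injective g)
    (hvg : ∀ i, g i ≠ v)
    (hstar : ∀ i, c s(v, g i) = col)
    (hmatch : ∀ i j : Fin (t-1), (j : ℕ) = (i : ℕ) + 1 → (i : ℕ) % 2 = 0 →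
        (i : ℕ) + 2 ≤ 2 * r → c s(g i, g j) = col) :
    HasMonoCopyCol (SGraph t r) c col := by
  refine ⟨⟨fun j => if h : j.val = 0 then v
      else g ⟨j.val - 1, by have := j.isLt; omega⟩, ?_⟩, ?_⟩
  · intro a b hab
    simp only at hab
    by_cases ha : a.val = 0 <;> by_cases hb : b.val = 0
    · exact Fin.ext (ha.trans hb.symm)
    · rw [dif_pos ha, dif_neg hb] at hab; exact absurd hab.symm (hvg _)
    · rw [dif_neg ha, dif_pos hb] at hab; exact absurd hab (hvg _)
    · rw [dif_neg ha, dif_neg hb] at hab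
      have h2 : a.val - 1 = b.val - 1 := congrArg Fin.val (hg hab)
      exact Fin.ext (by omega)
  · intro a b hadj
    rw [SGraph, SimpleGraph.fromRel_adj] at hadj
    obtain ⟨hne, hrel⟩ := hadj
    have hne' : a.val ≠ b.val := fun h => hne (Fin.ext h)
    have hat := a.isLt
    have hbt := b.isLt
    show c s((if h : a.val = 0 then v else g ⟨a.val - 1, by omega⟩),
      (if h : b.val = 0 then v else g ⟨b.val - 1, by omega⟩)) = col
    rcases hrel with (h0 | ⟨hb1, ha1, hb2⟩) | (h0 | ⟨ha1, hb1, ha2⟩)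
    · rw [dif_pos h0, dif_neg (show ¬ b.val = 0 by omega)]
      exact hstar _
    · rw [dif_neg (show ¬ a.val = 0 by omega), dif_neg (show ¬ b.val = 0 by omega)]
      exact hmatch ⟨a.val - 1, by omega⟩ ⟨b.val - 1, by omega⟩
        (show b.val - 1 = a.val - 1 + 1 by omega) (show (a.val - 1) % 2 = 0 by omega)
        (show a.val - 1 + 2 ≤ 2 * r by omega)
    · rw [dif_pos h0, dif_neg (show ¬ a.val = 0 by omega), Sym2.eq_swap]
      exact hstar _
    · rw [dif_neg (show ¬ a.val = 0 by omega), dif_neg (show ¬ b.val = 0 by omega),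
        Sym2.eq_swap]
      exact hmatch ⟨b.val - 1, by omega⟩ ⟨a.val - 1, by omega⟩
        (show a.val - 1 = b.val - 1 + 1 by omega) (show (b.val - 1) % 2 = 0 by omega)
        (show b.val - 1 + 2 ≤ 2 * r by omega)


lemma copy_of_matching {n t r : ℕ} (c : Sym2 (Fin n) → Fin 2) (col : Fin 2)
    (hr : 1 ≤ r) (ht : 2*r + 1 ≤ t)
    (v : Fin n) (N : Finset (Fin n))
    (hN : ∀ w ∈ N, w ≠ v ∧ c s(v, w) = col)
    (hcard : t - 1 ≤ N.card)
    (p : Fin (2*r) → Fin n) (hp : Function.Injective p) (hpN : ∀ i, p i ∈ N)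
    (hpc : ∀ i j : Fin (2*r), (j : ℕ) = (i : ℕ) + 1 → (i : ℕ) % 2 = 0 →
        c s(p i, p j) = col) :
    HasMonoCopyCol (SGraph t r) c col := by
  classical
  set P : Finset (Fin n) := Finset.univ.image p with hP
  have hPN : P ⊆ N := by
    intro w hw
    simp only [hP, Finset.mem_image] at hw
    obtain ⟨i, _, rfl⟩ := hw
    exact hpN i
  have hPcard : P.card = 2*r := by
    rw [hP, Finset.card_image_of_injective _ hp, Finset.card_univ, Fintype.card_fin]
  have hQcard : t - 1 - 2*r ≤ (N \ P).card := by
    rw [Finset.card_sdiff_of_subset hPN, hPcard]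
    omega
  obtain ⟨q, hq, hqQ⟩ := exists_inj (N \ P) (t - 1 - 2*r) hQcard
  have hqN : ∀ i, q i ∈ N := fun i => (Finset.mem_sdiff.mp (hqQ i)).1
  have hqP : ∀ i, q i ∉ P := fun i => (Finset.mem_sdiff.mp (hqQ i)).2
  set g : Fin (t-1) → Fin n := fun i =>
    if h : i.val < 2*r then p ⟨i.val, h⟩
    else q ⟨i.val - 2*r, by have := i.isLt; omega⟩ with hgdef
  have hgN : ∀ i, g i ∈ N := by
    intro i
    by_cases h : i.val < 2*r
    · simp only [hgdef, dif_pos h]; exact hpN _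
    · simp only [hgdef, dif_neg h]; exact hqN _
  refine build c col (by omega) v g ?_ (fun i => (hN _ (hgN i)).1)
      (fun i => (hN _ (hgN i)).2) ?_
  · intro a b hab
    simp only [hgdef] at hab
    by_cases ha : a.val < 2*r <;> by_cases hb : b.val < 2*r
    · rw [dif_pos ha, dif_pos hb] at hab
      exact Fin.ext (congrArg Fin.val (hp hab) : _)
    · rw [dif_pos ha, dif_neg hb] at hab
      exact absurd (hab ▸ Finset.mem_image_of_mem p (Finset.mem_univ _)) (hqP _)
    · rw [dif_neg ha, dif_pos hb] at hab
      exact absurd (hab ▸ Finset.mem_image_of_mem p (Finset.mem_univ _)) (hqP _)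
    · rw [dif_neg ha, dif_neg hb] at hab
      have h5 : a.val - 2*r = b.val - 2*r := congrArg Fin.val (hq hab)
      exact Fin.ext (by omega)
  · intro i j hij hev hle
    have hi : i.val < 2*r := by omega
    have hj : j.val < 2*r := by omega
    simp only [hgdef, dif_pos hi, dif_pos hj]
    exact hpc ⟨i.val, hi⟩ ⟨j.val, hj⟩ hij hev

lemma match_or_free {n : ℕ} (c : Sym2 (Fin n) → Fin 2) (col : Fin 2) :
    ∀ (k : ℕ) (N : Finset (Fin n)),
    (∃ p : Fin (2*(k+1)) → Fin n, Function.Injective p ∧ (∀ i, p i ∈ N) ∧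
      ∀ i j : Fin (2*(k+1)), (j : ℕ) = (i : ℕ) + 1 → (i : ℕ) % 2 = 0 →
        c s(p i, p j) = col)
    ∨ (∃ M ⊆ N, N.card ≤ M.card + 2*k ∧
        ∀ x ∈ M, ∀ y ∈ M, x ≠ y → c s(x,y) ≠ col) := by
  intro k
  induction k with
  | zero =>
    intro N
    by_cases hE : ∃ x ∈ N, ∃ y ∈ N, x ≠ y ∧ c s(x,y) = col
    · obtain ⟨x, hx, y, hy, hxy, hcol⟩ := hE
      left
      refine ⟨fun i => if i.val = 0 then x else y, ?_, ?_, ?_⟩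
      · intro i j hij
        by_cases hi : i.val = 0 <;> by_cases hj : j.val = 0 <;>
          simp only [hi, hj, if_pos, if_neg, if_true, if_false] at hij <;>
          first
            | (exact Fin.ext (by omega))
            | (exact absurd hij hxy)
            | (exact absurd hij.symm hxy)
      · intro i; by_cases hi : i.val = 0 <;> simp only [hi, if_true, if_false,
          if_pos, if_neg] <;> assumption
      · intro i j hij hev
        have h1 : i.val = 0 := by have := i.isLt; have := j.isLt; omega
        have h2 : ¬ j.val = 0 := by omega
        simp only [h1, h2, if_true, if_false, if_pos, if_neg]
        exact hcol
    · right
      push_neg at hE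
      exact ⟨N, Finset.Subset.refl N, by omega, hE⟩
  | succ k ih =>
    intro N
    by_cases hE : ∃ x ∈ N, ∃ y ∈ N, x ≠ y ∧ c s(x,y) = col
    · obtain ⟨x, hx, y, hy, hxy, hcol⟩ := hE
      have hxyN : {x, y} ⊆ N := by
        intro w hw
        simp only [Finset.mem_insert, Finset.mem_singleton] at hw
        rcases hw with rfl | rfl <;> assumption
      have hcard2 : ({x, y} : Finset (Fin n)).card = 2 := by
        rw [Finset.card_insert_of_notMem (by simpa using hxy), Finset.card_singleton]
      rcases ih (N \ {x, y}) with ⟨p', h1, h2, h3⟩ | ⟨M, hsub, hcardM, hfree⟩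
      · left
        have hp'mem : ∀ i, p' i ∈ N ∧ p' i ≠ x ∧ p' i ≠ y := by
          intro i
          have h5 := h2 i
          simp only [Finset.mem_sdiff, Finset.mem_insert, Finset.mem_singleton] at h5
          exact ⟨h5.1, fun h => h5.2 (Or.inl h), fun h => h5.2 (Or.inr h)⟩
        refine ⟨fun i => if i.val = 0 then x else if i.val = 1 then y
            else p' ⟨i.val - 2, by have := i.isLt; omega⟩, ?_, ?_, ?_⟩
        · intro i j hij
          simp only at hij
          by_cases hi0 : i.val = 0 <;> by_cases hj0 : j.val = 0
          · exact Fin.ext (hi0.trans hj0.symm)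
          · exfalso
            rw [if_pos hi0, if_neg hj0] at hij
            by_cases hj1 : j.val = 1
            · rw [if_pos hj1] at hij; exact hxy hij
            · rw [if_neg hj1] at hij; exact (hp'mem _).2.1 hij.symm
          · exfalso
            rw [if_neg hi0, if_pos hj0] at hij
            by_cases hi1 : i.val = 1
            · rw [if_pos hi1] at hij; exact hxy hij.symm
            · rw [if_neg hi1] at hij; exact (hp'mem _).2.1 hij
          · rw [if_neg hi0, if_neg hj0] at hij
            by_cases hi1 : i.val = 1 <;> by_cases hj1 : j.val = 1
            · exact Fin.ext (hi1.trans hj1.symm)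
            · exfalso
              rw [if_pos hi1, if_neg hj1] at hij
              exact (hp'mem _).2.2 hij.symm
            · exfalso
              rw [if_neg hi1, if_pos hj1] at hij
              exact (hp'mem _).2.2 hij
            · rw [if_neg hi1, if_neg hj1] at hij
              have h5 : i.val - 2 = j.val - 2 := congrArg Fin.val (h1 hij)
              exact Fin.ext (by omega)
        · intro i
          simp only
          by_cases hi0 : i.val = 0
          · rw [if_pos hi0]; exact hx
          · rw [if_neg hi0]
            by_cases hi1 : i.val = 1
            · rw [if_pos hi1]; exact hy
            · rw [if_neg hi1]; exact (hp'mem _).1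
        · intro i j hij hev
          simp only
          by_cases hi0 : i.val = 0
          · have hj1 : j.val = 1 := by omega
            rw [if_pos hi0, if_neg (by omega : ¬ j.val = 0), if_pos hj1]
            exact hcol
          · have hi1 : ¬ i.val = 1 := by omega
            rw [if_neg hi0, if_neg hi1, if_neg (by omega : ¬ j.val = 0),
              if_neg (by omega : ¬ j.val = 1)]
            exact h3 ⟨i.val - 2, by have := i.isLt; omega⟩
              ⟨j.val - 2, by have := j.isLt; omega⟩
              (by omega : j.val - 2 = i.val - 2 + 1) (by omega : (i.val - 2) % 2 = 0)
      · right
        refine ⟨M, hsub.trans (Finset.sdiff_subset), ?_, hfree⟩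
        have := Finset.card_sdiff_of_subset hxyN
        rw [hcard2] at this
        have hN2 : 2 ≤ N.card := hcard2 ▸ Finset.card_le_card hxyN
        omega
    · right
      push_neg at hE
      exact ⟨N, Finset.Subset.refl N, by omega, hE⟩


lemma fin2_cases (a : Fin 2) : a = 0 ∨ a = 1 := by
  rcases a with ⟨v, hv⟩
  rcases (by omega : v = 0 ∨ v = 1) with rfl | rfl
  · exact Or.inl rfl
  · exact Or.inr rfl

lemma fin2_resolve {a b : Fin 2} (h : a ≠ b) : a = 1 - b := by
  rcases fin2_cases a with rfl | rfl <;> rcases fin2_cases b with rfl | rfl <;>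
    revert h <;> decide

lemma clique_copy {n t r : ℕ} (c : Sym2 (Fin n) → Fin 2) (col : Fin 2)
    (M : Finset (Fin n)) (hcard : t ≤ M.card)
    (hM : ∀ x ∈ M, ∀ y ∈ M, x ≠ y → c s(x,y) = col) :
    HasMonoCopyCol (SGraph t r) c col := by
  obtain ⟨q, hqi, hqM⟩ := exists_inj M t hcard
  exact ⟨⟨q, hqi⟩, fun a b hab =>
    hM _ (hqM a) _ (hqM b) (fun h => hab.ne (hqi h))⟩

def Nc {n : ℕ} (c : Sym2 (Fin n) → Fin 2) (col : Fin 2) (u : Fin n) : Finset (Fin n) :=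
  Finset.univ.filter fun w => w ≠ u ∧ c s(u,w) = col

lemma mem_Nc {n : ℕ} {c : Sym2 (Fin n) → Fin 2} {col : Fin 2} {u w : Fin n} :
    w ∈ Nc c col u ↔ w ≠ u ∧ c s(u,w) = col := by
  simp [Nc]

lemma Nc_card {n : ℕ} (c : Sym2 (Fin n) → Fin 2) (u : Fin n) :
    (Nc c 0 u).card + (Nc c 1 u).card = n - 1 := by
  classical
  have hdisj : Disjoint (Nc c 0 u) (Nc c 1 u) := by
    rw [Finset.disjoint_left]
    intro w h0 h1
    rw [mem_Nc] at h0 h1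
    rw [h0.2] at h1
    exact absurd h1.2 (by decide)
  have hunion : Nc c 0 u ∪ Nc c 1 u = Finset.univ.erase u := by
    ext w
    simp only [Finset.mem_union, mem_Nc, Finset.mem_erase, Finset.mem_univ, and_true]
    rcases fin2_cases (c s(u,w)) with h | h <;> rw [h] <;>
      constructor <;> intro hh
    · exact hh.elim And.left And.left
    · exact Or.inl ⟨hh, rfl⟩
    · exact hh.elim And.left And.left
    · exact Or.inr ⟨hh, rfl⟩
  have := Finset.card_union_of_disjoint hdisj
  rw [hunion, Finset.card_erase_of_mem (Finset.mem_univ u), Finset.card_univ,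
    Fintype.card_fin] at this
  omega

lemma lemA {n t r : ℕ} (c : Sym2 (Fin n) → Fin 2) (col : Fin 2)
    (hr : 1 ≤ r) (ht : 2*r + 1 ≤ t) (v : Fin n)
    (hd : t - 1 ≤ (Nc c col v).card) :
    HasMonoCopyCol (SGraph t r) c col ∨
      ∃ M : Finset (Fin n), (Nc c col v).card ≤ M.card + 2*(r-1) ∧
        ∀ x ∈ M, ∀ y ∈ M, x ≠ y → c s(x,y) = 1 - col := by
  rcases match_or_free c col (r-1) (Nc c col v) with ⟨p, h1, h2, h3⟩ | ⟨M, hsub, hcard, hfree⟩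
  · left
    have hre : 2*(r-1+1) = 2*r := by omega
    refine copy_of_matching c col hr ht v (Nc c col v)
      (fun w hw => mem_Nc.mp hw) hd
      (fun i => p (Fin.cast hre.symm i)) ?_ (fun i => h2 _) ?_
    · intro i j hij
      have := h1 hij
      exact Fin.ext (congrArg Fin.val this : _)
    · intro i j hij hev
      exact h3 (Fin.cast hre.symm i) (Fin.cast hre.symm j) hij hev
  · right
    exact ⟨M, hcard, fun x hx y hy hxy => fin2_resolve (hfree x hx y hy hxy)⟩

lemma toCopy {α V C : Type*} {H : SimpleGraph α} {c : Sym2 V → C} {col : C}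
    (h : HasMonoCopyCol H c col) : HasMonoCopy H c := by
  obtain ⟨f, hf⟩ := h
  exact ⟨f, col, hf⟩

lemma main_aux {r t : ℕ} (hr : 1 ≤ r) (ht : 6*r - 4 ≤ t) (htt : 2*r + 1 ≤ t)
    (c : Sym2 (Fin (2*t + 2*r - 1)) → Fin 2) (col : Fin 2) (v : Fin (2*t + 2*r - 1))
    (hd : t + r - 1 ≤ (Nc c col v).card) :
    HasMonoCopy (SGraph t r) c := by
  rcases lemA c col hr htt v (by omega) with h | ⟨M, hMc, hM⟩
  · exact toCopy h
  have hM1 : t - r + 1 ≤ M.card := by omega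
  by_cases hMt : t ≤ M.card
  · exact toCopy (clique_copy c (1 - col) M hMt hM)
  have hr2 : 2 ≤ r := by omega
  obtain ⟨u, hu⟩ : M.Nonempty := Finset.card_pos.mp (by omega)
  by_cases hud : t - 1 ≤ (Nc c (1-col) u).card
  · -- copy centered at u with matching inside M
    have hsub : M.erase u ⊆ Nc c (1-col) u := by
      intro w hw
      rw [Finset.mem_erase] at hw
      rw [mem_Nc]
      exact ⟨hw.1, by rw [Sym2.eq_swap]; exact hM w hw.2 u hu hw.1⟩
    have hcard2 : 2*r ≤ (M.erase u).card := by
      rw [Finset.card_erase_of_mem hu]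
      omega
    obtain ⟨p, hpi, hpM⟩ := exists_inj (M.erase u) (2*r) hcard2
    refine toCopy (copy_of_matching c (1-col) hr htt u (Nc c (1-col) u)
      (fun w hw => mem_Nc.mp hw) hud p hpi (fun i => hsub (hpM i)) ?_)
    intro i j hij hev
    have hi := Finset.mem_erase.mp (hpM i)
    have hj := Finset.mem_erase.mp (hpM j)
    exact hM _ hi.2 _ hj.2 (fun h => by
      have : i = j := hpi h
      omega)
  · have hsum := Nc_card c u
    have hud2 : t + 2*r ≤ (Nc c col u).card := by
      rcases fin2_cases col with rfl | rfl
      · have h10 : (1 : Fin 2) - 0 = 1 := by decide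
        rw [h10] at hud
        omega
      · have h10 : (1 : Fin 2) - 1 = 0 := by decide
        rw [h10] at hud
        omega
    rcases lemA c col hr htt u (by omega) with h | ⟨M', hM'c, hM'⟩
    · exact toCopy h
    · exact toCopy (clique_copy c (1 - col) M' (by omega) hM')

end StrHelper

theorem ramsey_Str_upper (r t : ℕ) (hr : 1 ≤ r) (ht : 6 * r - 4 ≤ t) :
    ∀ c : Sym2 (Fin (2 * t + 2 * r - 1)) → Fin 2, HasMonoCopy (SGraph t r) c := by
  intro c
  by_cases htt : 2*r + 1 ≤ t
  · have hn : 0 < 2*t + 2*r - 1 := by omega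
    set v : Fin (2*t + 2*r - 1) := ⟨0, hn⟩
    have hsum := StrHelper.Nc_card c v
    rcases (by omega : t + r - 1 ≤ (StrHelper.Nc c 0 v).card ∨
        t + r - 1 ≤ (StrHelper.Nc c 1 v).card) with h | h
    · exact StrHelper.main_aux hr ht htt c 0 v h
    · exact StrHelper.main_aux hr ht htt c 1 v h
  · have hr1 : r = 1 := by omega
    have ht2 : t = 2 := by omega
    subst hr1 ht2
    refine ⟨⟨fun i => ⟨i.val, by have := i.isLt; omega⟩, ?_⟩,
      c s(⟨0, by omega⟩, ⟨1, by omega⟩), ?_⟩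
    · intro a b hab
      exact Fin.ext (congrArg Fin.val hab : _)
    · intro a b hadj
      have hne := hadj.ne
      fin_cases a <;> fin_cases b
      · exact absurd rfl hne
      · rfl
      · exact congrArg c Sym2.eq_swap
      · exact absurd rfl hne
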